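/- Let N ≥ 3 be an integer, let p, q be primes satisfying condition (W), and let i, n be integers with 3 ≤ i ≤ n ≤ N. Then: (i) f_{x_n(i)}(t_i) = f_{x_n(i+1)}(t_i); (ii) f_{x_n(i)}(t) > f_{x_n(i+1)}(t) for all 0 < t < t_i; and (iii) f_{x_n(i)}(t) < f_{x_n(i+1)}(t) for all t > t_i. -/

import Mathlib

open Real

/-- The golden ratio `(1 + √5)/2`. -/
noncomputable def phiR : ℝ := (1 + Real.sqrt 5) / 2

/-- `mmax p q n = max(h_n·log p, h_{n-1}·log q)`, the logarithmic Mahler measure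
of `p^{h_n}/q^{h_{n-1}}` for distinct primes `p`, `q`, where `h` is Fibonacci. -/
noncomputable def mmax (p q n : ℕ) : ℝ :=
  max ((Nat.fib n : ℝ) * Real.log p) ((Nat.fib (n - 1) : ℝ) * Real.log q)

/-- `gmax n = max(h_n, φ·h_{n-1})`. -/
noncomputable def gmax (n : ℕ) : ℝ :=
  max (Nat.fib n : ℝ) (phiR * (Nat.fib (n - 1) : ℝ))

/-- The equation defining `t_n(p,q)`:
`m(p^{h_n}/q^{h_{n-1}})^t = m(p^{h_{n-1}}/q^{h_{n-2}})^t + m(p^{h_{n-2}}/q^{h_{n-3}})^t`. -/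
def peq (p q n : ℕ) (t : ℝ) : Prop :=
  mmax p q n ^ t = mmax p q (n - 1) ^ t + mmax p q (n - 2) ^ t

/-- The equation defining `s_n`:
`max(h_n, φ h_{n-1})^t = max(h_{n-1}, φ h_{n-2})^t + max(h_{n-2}, φ h_{n-3})^t`. -/
def geq (n : ℕ) (t : ℝ) : Prop :=
  gmax n ^ t = gmax (n - 1) ^ t + gmax (n - 2) ^ t

/-- Condition (W) on a pair of primes `(p,q)` relative to `N`. -/
def CondW (N p q : ℕ) : Prop :=
  ((Nat.fib N : ℝ) / Nat.fib (N - 1) < Real.log q / Real.log p ∧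
    Real.log q / Real.log p < (Nat.fib (N - 1) : ℝ) / Nat.fib (N - 2)) ∨
  ((Nat.fib (N - 1) : ℝ) / Nat.fib (N - 2) < Real.log q / Real.log p ∧
    Real.log q / Real.log p < (Nat.fib N : ℝ) / Nat.fib (N - 1))

/-- `V_n`: vectors `x ∈ ℕ^N` (1-based entry `i` is `x ⟨i-1⟩`) with
`Σ x_i h_i = h_n` and `Σ x_i h_{i-1} = h_{n-1}`. -/
def Vset (N n : ℕ) : Set (Fin N → ℕ) :=
  {x | ∑ i, x i * Nat.fib ((i : ℕ) + 1) = Nat.fib n ∧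
       ∑ i, x i * Nat.fib (i : ℕ) = Nat.fib (n - 1)}

/-- The measure function `f_x(t) = (Σ_{i=1}^N x_i·max(h_i log p, h_{i-1} log q)^t)^{1/t}`. -/
noncomputable def fmeas (N p q : ℕ) (x : Fin N → ℕ) (t : ℝ) : ℝ :=
  (∑ i, (x i : ℝ) * mmax p q ((i : ℕ) + 1) ^ t) ^ (1 / t)

/-- `x_n(i)`: the vector whose (i−2)nd (1-based) entry is `h_{n+1−i}`, whose
(i−1)st entry is `h_{n+2−i}`, and whose other entries are 0.  (For `i = 2`, `n = 1`
this gives `x_1(2) = (1,0,…,0)`.) -/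
def xvec (N n i : ℕ) : Fin N → ℕ := fun j =>
  if (j : ℕ) + 3 = i then Nat.fib (n + 1 - i)
  else if (j : ℕ) + 2 = i then Nat.fib (n + 2 - i)
  else 0

/-- `S_n = {x_n(i) : 3 ≤ i ≤ n+1}` for `n ≥ 2`, and `S_1 = {x_1(2)}`. -/
def Sset (N n : ℕ) : Set (Fin N → ℕ) :=
  if n = 1 then {xvec N 1 2}
  else {x | ∃ i, 3 ≤ i ∧ i ≤ n + 1 ∧ x = xvec N n i}

/-- `z` is almost consecutive-free: `z_j·z_{j+1} ≠ 0` implies `z_i = 0` for all `i > j+1`. -/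
def ACF (N : ℕ) (z : Fin N → ℕ) : Prop :=
  ∀ (j : Fin N) (hj : (j : ℕ) + 1 < N),
    z j * z ⟨(j : ℕ) + 1, hj⟩ ≠ 0 → ∀ i : Fin N, (j : ℕ) + 1 < (i : ℕ) → z i = 0

/-- `C_n`: the almost consecutive-free elements of `V_n`. -/
def Cset (N n : ℕ) : Set (Fin N → ℕ) := {z ∈ Vset N n | ACF N z}

/-- A factorization of `z ∈ V_n`: a `K`-tuple `x` with `x k ∈ V_{idx k}`,
`1 ≤ idx k ≤ n`, and `z = Σ_k x k`. -/
def IsFactorization (N n : ℕ) (z : Fin N → ℕ) {K : ℕ}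
    (idx : Fin K → ℕ) (x : Fin K → Fin N → ℕ) : Prop :=
  (∀ k, 1 ≤ idx k ∧ idx k ≤ n ∧ x k ∈ Vset N (idx k)) ∧ z = ∑ k, x k

/-- A tuple is `S`-type if each component lies in `∪_{i=1}^n S_i`. -/
def STypeFac (N n : ℕ) {K : ℕ} (x : Fin K → Fin N → ℕ) : Prop :=
  ∀ k, ∃ i, 1 ≤ i ∧ i ≤ n ∧ x k ∈ Sset N i

/-- `z` is `S`-restricted: every non-trivial (i.e. `K ≠ 1`) factorization is `S`-type. -/
def SRestricted (N n : ℕ) (z : Fin N → ℕ) : Prop :=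
  ∀ (K : ℕ) (idx : Fin K → ℕ) (x : Fin K → Fin N → ℕ),
    IsFactorization N n z idx x → K ≠ 1 → STypeFac N n x

/-- `R_n`: the `S`-restricted elements of `C_n`. -/
def Rset (N n : ℕ) : Set (Fin N → ℕ) := {z ∈ Cset N n | SRestricted N n z}

/-- The infimum attaining set `U_x = {t > 0 : f_x(t) = min{f_y(t) : y ∈ V_j}}`. -/
def Uset (N p q j : ℕ) (x : Fin N → ℕ) : Set ℝ :=
  {t | 0 < t ∧ IsLeast ((fun y => fmeas N p q y t) '' Vset N j) (fmeas N p q x t)}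

/-- The shift map `λ((x_1,…,x_N)) = (0,x_1,…,x_{N-1})`. -/
def shiftMap (N : ℕ) (x : Fin N → ℕ) : Fin N → ℕ := fun j =>
  if (j : ℕ) = 0 then 0
  else x ⟨(j : ℕ) - 1, lt_of_le_of_lt (Nat.sub_le _ _) j.isLt⟩


private lemma key_sign (A B C t0 : ℝ) (hB : 0 < B) (hC : 0 < C) (hBA : B < A) (hCA : C < A)
    (heq : A ^ t0 = B ^ t0 + C ^ t0) :
    (∀ t : ℝ, t < t0 → A ^ t < B ^ t + C ^ t) ∧ (∀ t : ℝ, t0 < t → B ^ t + C ^ t < A ^ t) := by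
  have hA : 0 < A := hB.trans hBA
  have hdiv : ∀ t : ℝ, (B / A) ^ t + (C / A) ^ t = (B ^ t + C ^ t) / A ^ t := fun t => by
    rw [Real.div_rpow hB.le hA.le, Real.div_rpow hC.le hA.le, ← add_div]
  have h1 : (B / A) ^ t0 + (C / A) ^ t0 = 1 := by
    rw [hdiv, ← heq, div_self (Real.rpow_pos_of_pos hA t0).ne']
  have hBA1 : B / A < 1 := (div_lt_one hA).2 hBA
  have hCA1 : C / A < 1 := (div_lt_one hA).2 hCA
  have hBA0 : 0 < B / A := div_pos hB hA
  have hCA0 : 0 < C / A := div_pos hC hA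
  constructor
  · intro t ht
    have h2 : (B / A) ^ t0 < (B / A) ^ t := Real.rpow_lt_rpow_of_exponent_gt hBA0 hBA1 ht
    have h3 : (C / A) ^ t0 < (C / A) ^ t := Real.rpow_lt_rpow_of_exponent_gt hCA0 hCA1 ht
    have h4 : 1 < (B ^ t + C ^ t) / A ^ t := by rw [← hdiv]; linarith
    have hAt : 0 < A ^ t := Real.rpow_pos_of_pos hA t
    rw [lt_div_iff₀ hAt, one_mul] at h4
    exact h4
  · intro t ht
    have h2 : (B / A) ^ t < (B / A) ^ t0 := Real.rpow_lt_rpow_of_exponent_gt hBA0 hBA1 ht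
    have h3 : (C / A) ^ t < (C / A) ^ t0 := Real.rpow_lt_rpow_of_exponent_gt hCA0 hCA1 ht
    have h4 : (B ^ t + C ^ t) / A ^ t < 1 := by rw [← hdiv]; linarith
    have hAt : 0 < A ^ t := Real.rpow_pos_of_pos hA t
    rw [div_lt_one hAt] at h4
    exact h4

private lemma sum_xvec (N p q n m : ℕ) (h3 : 3 ≤ m) (hmN : m ≤ N + 1) (hN2 : 2 ≤ N) (t : ℝ) :
    ∑ j : Fin N, (xvec N n m j : ℝ) * mmax p q ((j : ℕ) + 1) ^ t
      = (Nat.fib (n + 1 - m) : ℝ) * mmax p q (m - 2) ^ t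
        + (Nat.fib (n + 2 - m) : ℝ) * mmax p q (m - 1) ^ t := by
  have hma : m - 3 < N := by omega
  have hmb : m - 2 < N := by omega
  have ha : xvec N n m ⟨m - 3, hma⟩ = Nat.fib (n + 1 - m) := by
    simp only [xvec]
    rw [if_pos (show m - 3 + 3 = m by omega)]
  have hb : xvec N n m ⟨m - 2, hmb⟩ = Nat.fib (n + 2 - m) := by
    simp only [xvec]
    rw [if_neg (show ¬(m - 2 + 3 = m) by omega), if_pos (show m - 2 + 2 = m by omega)]
  rw [Finset.sum_eq_add_of_mem (⟨m - 3, hma⟩ : Fin N) (⟨m - 2, hmb⟩ : Fin N)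
      (Finset.mem_univ _) (Finset.mem_univ _)
      (by simp only [ne_eq, Fin.mk.injEq]; omega)
      (by
        rintro c - ⟨hca, hcb⟩
        have h1 : (c : ℕ) ≠ m - 3 := fun h => hca (Fin.ext h)
        have h2 : (c : ℕ) ≠ m - 2 := fun h => hcb (Fin.ext h)
        have hz : xvec N n m c = 0 := by
          simp only [xvec]
          rw [if_neg (by omega), if_neg (by omega)]
        rw [hz]
        simp)]
  rw [ha, hb]
  norm_num
  rw [show m - 3 + 1 = m - 2 by omega, show m - 2 + 1 = m - 1 by omega]


/-- Lemma `VectorIntersection`: for `N ≥ 3`, primes `p, q` satisfying (W),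
`t_m = t_m(p,q)` the unique positive solutions of the Mahler-measure equations, and
`3 ≤ i ≤ n ≤ N`: (i) `f_{x_n(i)}(t_i) = f_{x_n(i+1)}(t_i)`;
(ii) `f_{x_n(i)}(t) > f_{x_n(i+1)}(t)` for `0 < t < t_i`;
(iii) `f_{x_n(i)}(t) < f_{x_n(i+1)}(t)` for `t > t_i`. -/
theorem stmt5 (N p q : ℕ) (hN : 3 ≤ N) (hp : p.Prime) (hq : q.Prime) (hW : CondW N p q)
    (tt : ℕ → ℝ)
    (htt : ∀ m : ℕ, 3 ≤ m →
      (0 < tt m ∧ peq p q m (tt m)) ∧ ∀ t' : ℝ, 0 < t' → peq p q m t' → t' = tt m)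
    (i n : ℕ) (h3i : 3 ≤ i) (hin : i ≤ n) (hnN : n ≤ N) :
    fmeas N p q (xvec N n i) (tt i) = fmeas N p q (xvec N n (i + 1)) (tt i) ∧
    (∀ t : ℝ, 0 < t → t < tt i →
      fmeas N p q (xvec N n (i + 1)) t < fmeas N p q (xvec N n i) t) ∧
    (∀ t : ℝ, tt i < t →
      fmeas N p q (xvec N n i) t < fmeas N p q (xvec N n (i + 1)) t) := by
  -- basic facts about logs
  have hlp : 0 < Real.log p := Real.log_pos (by exact_mod_cast hp.one_lt)
  have hlq : 0 < Real.log q := Real.log_pos (by exact_mod_cast hq.one_lt)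
  -- log q < 2 log p from condition (W)
  have hq2p : Real.log q < 2 * Real.log p := by
    have hf1 : 0 < Nat.fib (N - 1) := Nat.fib_pos.2 (by omega)
    have hf2 : 0 < Nat.fib (N - 2) := Nat.fib_pos.2 (by omega)
    have hfa : Nat.fib N ≤ 2 * Nat.fib (N - 1) := by
      have h := @Nat.fib_add_two (N - 2)
      have h2 := @Nat.fib_le_fib_succ (N - 2)
      rw [show N - 2 + 2 = N by omega, show N - 2 + 1 = N - 1 by omega] at h
      rw [show N - 2 + 1 = N - 1 by omega] at h2
      omega
    have hfb : Nat.fib (N - 1) ≤ 2 * Nat.fib (N - 2) := by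
      have h := @Nat.fib_add_two (N - 3)
      have h2 := @Nat.fib_le_fib_succ (N - 3)
      rw [show N - 3 + 2 = N - 1 by omega, show N - 3 + 1 = N - 2 by omega] at h
      rw [show N - 3 + 1 = N - 2 by omega] at h2
      omega
    have hα : Real.log q / Real.log p < 2 := by
      rcases hW with ⟨-, h⟩ | ⟨-, h⟩
      · refine h.trans_le ?_
        rw [div_le_iff₀ (by exact_mod_cast hf2)]
        calc (Nat.fib (N - 1) : ℝ) ≤ (2 * Nat.fib (N - 2) : ℕ) := by exact_mod_cast hfb
          _ = 2 * (Nat.fib (N - 2) : ℝ) := by push_cast; ring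
      · refine h.trans_le ?_
        rw [div_le_iff₀ (by exact_mod_cast hf1)]
        calc (Nat.fib N : ℝ) ≤ (2 * Nat.fib (N - 1) : ℕ) := by exact_mod_cast hfa
          _ = 2 * (Nat.fib (N - 1) : ℝ) := by push_cast; ring
    rw [div_lt_iff₀ hlp] at hα
    linarith
  -- Fibonacci facts
  have hfi1 : Nat.fib (i - 1) < Nat.fib i := by
    have := Nat.fib_lt_fib_succ (n := i - 1) (by omega)
    rwa [show i - 1 + 1 = i by omega] at this
  have hfi2 : Nat.fib (i - 2) ≤ Nat.fib (i - 1) := by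
    have := @Nat.fib_le_fib_succ (i - 2)
    rwa [show i - 2 + 1 = i - 1 by omega] at this
  have hfi2pos : 0 < Nat.fib (i - 2) := Nat.fib_pos.2 (by omega)
  have hfi1pos : 0 < Nat.fib (i - 1) := Nat.fib_pos.2 (by omega)
  have hfadd : Nat.fib i = Nat.fib (i - 2) + Nat.fib (i - 1) := by
    have := @Nat.fib_add_two (i - 2)
    rwa [show i - 2 + 2 = i by omega, show i - 2 + 1 = i - 1 by omega] at this
  have hfadd' : Nat.fib (i - 1) = Nat.fib (i - 3) + Nat.fib (i - 2) := by
    have := @Nat.fib_add_two (i - 3)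
    rwa [show i - 3 + 2 = i - 1 by omega, show i - 3 + 1 = i - 2 by omega] at this
  have hfi3 : Nat.fib (i - 3) ≤ Nat.fib (i - 2) := by
    have := @Nat.fib_le_fib_succ (i - 3)
    rwa [show i - 3 + 1 = i - 2 by omega] at this
  -- abbreviations
  set A := mmax p q i with hAdef
  set B := mmax p q (i - 1) with hBdef
  set C := mmax p q (i - 2) with hCdef
  have hAmax : ((Nat.fib i : ℝ)) * Real.log p ≤ A := le_max_left _ _
  have hBA : B < A := by
    have h1 : ((Nat.fib (i - 1) : ℝ)) * Real.log p < (Nat.fib i : ℝ) * Real.log p := by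
      apply mul_lt_mul_of_pos_right _ hlp
      exact_mod_cast hfi1
    have h2 : ((Nat.fib (i - 1 - 1) : ℝ)) * Real.log q < (Nat.fib i : ℝ) * Real.log p := by
      rw [show i - 1 - 1 = i - 2 by omega]
      have e1 : ((Nat.fib (i - 2) : ℝ)) * Real.log q < (Nat.fib (i - 2) : ℝ) * (2 * Real.log p) := by
        apply mul_lt_mul_of_pos_left hq2p
        exact_mod_cast hfi2pos
      have e2 : (Nat.fib (i - 2) : ℝ) * (2 * Real.log p) ≤ (Nat.fib i : ℝ) * Real.log p := by
        have hc : 2 * (Nat.fib (i - 2) : ℝ) ≤ (Nat.fib i : ℝ) := by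
          have : 2 * Nat.fib (i - 2) ≤ Nat.fib i := by omega
          exact_mod_cast this
        nlinarith [hlp.le]
      linarith
    exact max_lt (h1.trans_le hAmax) (h2.trans_le hAmax)
  have hCA : C < A := by
    have h1 : ((Nat.fib (i - 2) : ℝ)) * Real.log p < (Nat.fib i : ℝ) * Real.log p := by
      apply mul_lt_mul_of_pos_right _ hlp
      exact_mod_cast by omega
    have h2 : ((Nat.fib (i - 2 - 1) : ℝ)) * Real.log q < (Nat.fib i : ℝ) * Real.log p := by
      rw [show i - 2 - 1 = i - 3 by omega]
      have e1 : ((Nat.fib (i - 3) : ℝ)) * Real.log q ≤ (Nat.fib (i - 3) : ℝ) * (2 * Real.log p) := by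
        apply mul_le_mul_of_nonneg_left hq2p.le (Nat.cast_nonneg _)
      have e2 : (Nat.fib (i - 3) : ℝ) * (2 * Real.log p) ≤ (Nat.fib (i - 1) : ℝ) * Real.log p := by
        have hc : 2 * (Nat.fib (i - 3) : ℝ) ≤ (Nat.fib (i - 1) : ℝ) := by
          have : 2 * Nat.fib (i - 3) ≤ Nat.fib (i - 1) := by omega
          exact_mod_cast this
        nlinarith [hlp.le]
      have e3 : ((Nat.fib (i - 1) : ℝ)) * Real.log p < (Nat.fib i : ℝ) * Real.log p := by
        apply mul_lt_mul_of_pos_right _ hlp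
        exact_mod_cast hfi1
      linarith
    exact max_lt (h1.trans_le hAmax) (h2.trans_le hAmax)
  have hB : 0 < B := by
    have : (0 : ℝ) < (Nat.fib (i - 1) : ℝ) * Real.log p := by
      apply mul_pos _ hlp
      exact_mod_cast hfi1pos
    exact this.trans_le (le_max_left _ _)
  have hC : 0 < C := by
    have : (0 : ℝ) < (Nat.fib (i - 2) : ℝ) * Real.log p := by
      apply mul_pos _ hlp
      exact_mod_cast hfi2pos
    exact this.trans_le (le_max_left _ _)
  -- the defining equation
  obtain ⟨⟨ht0pos, hpeq⟩, -⟩ := htt i h3i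
  unfold peq at hpeq
  rw [← hAdef, ← hBdef, ← hCdef] at hpeq
  obtain ⟨hlt, hgt⟩ := key_sign A B C (tt i) hB hC hBA hCA hpeq
  -- sum computations
  have hN2 : 2 ≤ N := by omega
  have hsum1 : ∀ t : ℝ, ∑ j : Fin N, (xvec N n i j : ℝ) * mmax p q ((j : ℕ) + 1) ^ t
      = (Nat.fib (n + 1 - i) : ℝ) * C ^ t + (Nat.fib (n + 2 - i) : ℝ) * B ^ t := fun t =>
    sum_xvec N p q n i h3i (by omega) hN2 t
  have hsum2 : ∀ t : ℝ, ∑ j : Fin N, (xvec N n (i + 1) j : ℝ) * mmax p q ((j : ℕ) + 1) ^ t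
      = (Nat.fib (n - i) : ℝ) * B ^ t + (Nat.fib (n + 1 - i) : ℝ) * A ^ t := fun t => by
    have := sum_xvec N p q n (i + 1) (by omega) (by omega) hN2 t
    rwa [show i + 1 - 2 = i - 1 by omega, show i + 1 - 1 = i by omega,
      show n + 1 - (i + 1) = n - i by omega, show n + 2 - (i + 1) = n + 1 - i by omega] at this
  have hfibn : (Nat.fib (n + 2 - i) : ℝ) = (Nat.fib (n + 1 - i) : ℝ) + (Nat.fib (n - i) : ℝ) := by
    have h := @Nat.fib_add_two (n - i)
    rw [show n - i + 2 = n + 2 - i by omega, show n - i + 1 = n + 1 - i by omega] at h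
    have h2 : Nat.fib (n + 2 - i) = Nat.fib (n + 1 - i) + Nat.fib (n - i) := by omega
    exact_mod_cast h2
  have hF1 : (1 : ℝ) ≤ (Nat.fib (n + 1 - i) : ℝ) := by
    have : 0 < Nat.fib (n + 1 - i) := Nat.fib_pos.2 (by omega)
    exact_mod_cast this
  have hdiff : ∀ t : ℝ,
      ((Nat.fib (n + 1 - i) : ℝ) * C ^ t + (Nat.fib (n + 2 - i) : ℝ) * B ^ t)
        - ((Nat.fib (n - i) : ℝ) * B ^ t + (Nat.fib (n + 1 - i) : ℝ) * A ^ t)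
      = (Nat.fib (n + 1 - i) : ℝ) * (C ^ t + B ^ t - A ^ t) := fun t => by
    rw [hfibn]; ring
  have hmnn : ∀ k : ℕ, 0 ≤ mmax p q k := fun k =>
    le_trans (mul_nonneg (Nat.cast_nonneg _) hlp.le) (le_max_left _ _)
  have hSnn : ∀ (x : Fin N → ℕ) (t : ℝ),
      0 ≤ ∑ j : Fin N, (x j : ℝ) * mmax p q ((j : ℕ) + 1) ^ t := fun x t =>
    Finset.sum_nonneg fun j _ => mul_nonneg (Nat.cast_nonneg _) (Real.rpow_nonneg (hmnn _) _)
  refine ⟨?_, ?_, ?_⟩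
  · unfold fmeas
    rw [hsum1, hsum2]
    have hX : C ^ (tt i) + B ^ (tt i) - A ^ (tt i) = 0 := by linarith
    have hd := hdiff (tt i)
    rw [hX, mul_zero] at hd
    rw [show (Nat.fib (n + 1 - i) : ℝ) * C ^ (tt i) + (Nat.fib (n + 2 - i) : ℝ) * B ^ (tt i)
        = (Nat.fib (n - i) : ℝ) * B ^ (tt i) + (Nat.fib (n + 1 - i) : ℝ) * A ^ (tt i) from by
      linarith]
  · intro t ht htlt
    unfold fmeas
    apply Real.rpow_lt_rpow (hSnn _ t) _ (by positivity)
    rw [hsum1, hsum2]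
    have hx := hlt t htlt
    have hXpos : 0 < C ^ t + B ^ t - A ^ t := by linarith
    have hprod : 0 < (Nat.fib (n + 1 - i) : ℝ) * (C ^ t + B ^ t - A ^ t) :=
      mul_pos (by linarith) hXpos
    have hd := hdiff t
    linarith
  · intro t ht
    have htpos : 0 < t := ht0pos.trans ht
    unfold fmeas
    apply Real.rpow_lt_rpow (hSnn _ t) _ (by positivity)
    rw [hsum1, hsum2]
    have hx := hgt t ht
    have hXneg : C ^ t + B ^ t - A ^ t < 0 := by linarith
    have hprod : (Nat.fib (n + 1 - i) : ℝ) * (C ^ t + B ^ t - A ^ t) < 0 :=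
      mul_neg_of_pos_of_neg (by linarith) hXneg
    have hd := hdiff t
    linarith
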